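/- A word of the form 0^a 1 0^b (a single 1 surrounded by a zeros and b zeros) is Ulam if and only if the binomial coefficient C(a+b, a) is odd. -/

import Mathlib

/-- Ulam words with fuel bounding the recursion depth (fuel ≥ length suffices). -/
def UlamN : ℕ → List Bool → Prop
  | 0, _ => False
  | n + 1, w =>
    w = [false] ∨ w = [true] ∨
      ∃! p : List Bool × List Bool,
        p.1 ≠ [] ∧ p.2 ≠ [] ∧ UlamN n p.1 ∧ UlamN n p.2 ∧ p.1 ≠ p.2 ∧ p.1 ++ p.2 = w

/-- A word over {0,1} (`false` = 0, `true` = 1) is Ulam. -/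
def IsUlam (w : List Bool) : Prop := UlamN w.length w

/-- The integer whose binary representation (most significant digit first) is `w`. -/
def binVal (w : List Bool) : ℕ := w.foldl (fun acc b => 2 * acc + b.toNat) 0

/-! ### Auxiliary lemmas -/

lemma ulamN_succ (n : ℕ) (w : List Bool) :
    UlamN (n+1) w ↔ (w = [false] ∨ w = [true] ∨
      ∃! p : List Bool × List Bool,
        p.1 ≠ [] ∧ p.2 ≠ [] ∧ UlamN n p.1 ∧ UlamN n p.2 ∧ p.1 ≠ p.2 ∧ p.1 ++ p.2 = w) :=
  Iff.rfl

lemma ulamN_step : ∀ n, ∀ w : List Bool, w.length ≤ n → (UlamN (n+1) w ↔ UlamN n w) := by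
  intro n
  induction n with
  | zero =>
    intro w hw
    have hw0 : w = [] := List.eq_nil_of_length_eq_zero (Nat.le_zero.mp hw)
    subst hw0
    simp only [ulamN_succ]
    constructor
    · rintro (h | h | ⟨p, ⟨h1, h2, _, _, _, h6⟩, _⟩)
      · simp at h
      · simp at h
      · exact absurd (List.append_eq_nil_iff.mp h6).1 h1
    · intro h; exact absurd h (by simp [UlamN])
  | succ n ih =>
    intro w hw
    rw [ulamN_succ (n+1) w, ulamN_succ n w]
    refine or_congr Iff.rfl (or_congr Iff.rfl (existsUnique_congr fun p => ?_))
    constructor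
    · rintro ⟨h1, h2, h3, h4, h5, h6⟩
      have l1 : p.1.length ≤ n := by
        have := congrArg List.length h6
        simp only [List.length_append] at this
        have h2' : 1 ≤ p.2.length := List.length_pos_iff.mpr h2
        omega
      have l2 : p.2.length ≤ n := by
        have := congrArg List.length h6
        simp only [List.length_append] at this
        have h1' : 1 ≤ p.1.length := List.length_pos_iff.mpr h1
        omega
      exact ⟨h1, h2, (ih p.1 l1).mp h3, (ih p.2 l2).mp h4, h5, h6⟩
    · rintro ⟨h1, h2, h3, h4, h5, h6⟩
      have l1 : p.1.length ≤ n := by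
        have := congrArg List.length h6
        simp only [List.length_append] at this
        have h2' : 1 ≤ p.2.length := List.length_pos_iff.mpr h2
        omega
      have l2 : p.2.length ≤ n := by
        have := congrArg List.length h6
        simp only [List.length_append] at this
        have h1' : 1 ≤ p.1.length := List.length_pos_iff.mpr h1
        omega
      exact ⟨h1, h2, (ih p.1 l1).mpr h3, (ih p.2 l2).mpr h4, h5, h6⟩

lemma ulamN_of_le : ∀ {n : ℕ} {w : List Bool}, w.length ≤ n → (UlamN n w ↔ IsUlam w) := by
  intro n
  induction n with
  | zero =>
    intro w hw
    have : w = [] := List.eq_nil_of_length_eq_zero (Nat.le_zero.mp hw)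
    subst this; rfl
  | succ n ih =>
    intro w hw
    rcases Nat.lt_or_ge w.length (n+1) with h | h
    · exact (ulamN_step n w (Nat.lt_succ_iff.mp h)).trans (ih (Nat.lt_succ_iff.mp h))
    · have : w.length = n + 1 := le_antisymm hw h
      rw [IsUlam, this]

lemma ulamN_replicate_false : ∀ n k, UlamN n (List.replicate k false) → k = 1 := by
  intro n
  induction n with
  | zero => intro k h; exact absurd h (by simp [UlamN])
  | succ n ih =>
    intro k h
    rcases h with h | h | ⟨p, ⟨h1, h2, h3, h4, h5, h6⟩, _⟩
    · have := congrArg List.length h; simpa using this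
    · exfalso
      have hk : k = 1 := by have := congrArg List.length h; simpa using this
      subst hk; simp at h
    · exfalso
      have e1 : p.1 = List.replicate p.1.length false := by
        refine List.eq_replicate_of_mem fun x hx => ?_
        have : x ∈ List.replicate k false := h6 ▸ List.mem_append_left p.2 hx
        exact List.eq_of_mem_replicate this
      have e2 : p.2 = List.replicate p.2.length false := by
        refine List.eq_replicate_of_mem fun x hx => ?_
        have : x ∈ List.replicate k false := h6 ▸ List.mem_append_right p.1 hx
        exact List.eq_of_mem_replicate this
      have k1 : p.1.length = 1 := ih _ (e1 ▸ h3)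
      have k2 : p.2.length = 1 := ih _ (e2 ▸ h4)
      apply h5
      rw [e1, e2, k1, k2]

/-! ### The words `0^a 1 0^b` -/

def Wd (a b : ℕ) : List Bool := List.replicate a false ++ [true] ++ List.replicate b false

lemma Wd_length (a b : ℕ) : (Wd a b).length = a + b + 1 := by
  simp [Wd]; omega

lemma count_Wd (a b : ℕ) : (Wd a b).count true = 1 := by
  simp [Wd, List.count_replicate]

lemma true_mem_Wd (a b : ℕ) : true ∈ Wd a b := by simp [Wd]

lemma Wd_cons (a b : ℕ) : Wd (a+1) b = false :: Wd a b := by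
  simp [Wd, List.replicate_succ]

lemma Wd_concat (a b : ℕ) : Wd a (b+1) = Wd a b ++ [false] := by
  simp [Wd, List.replicate_succ']

lemma Wd_ne_flist (a b : ℕ) : Wd a b ≠ [false] := by
  intro h
  have := true_mem_Wd a b
  rw [h] at this; simp at this

lemma Wd_ne_nil (a b : ℕ) : Wd a b ≠ [] := by
  intro h
  have := true_mem_Wd a b
  rw [h] at this; simp at this

lemma Wd_zero_zero : Wd 0 0 = [true] := by simp [Wd]

lemma isUlam_flist : IsUlam [false] := Or.inl rfl

lemma isUlam_tlist : IsUlam [true] := Or.inr (Or.inl rfl)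

lemma split_Wd (a b n m : ℕ) {p : List Bool × List Bool}
    (h3 : UlamN n p.1) (h4 : UlamN m p.2)
    (h6 : p.1 ++ p.2 = Wd a b) :
    (∃ a', a = a' + 1 ∧ p.1 = [false] ∧ p.2 = Wd a' b) ∨
    (∃ b', b = b' + 1 ∧ p.1 = Wd a b' ∧ p.2 = [false]) := by
  have hcount : p.1.count true + p.2.count true = 1 := by
    have := congrArg (List.count true) h6
    rwa [List.count_append, count_Wd] at this
  rcases Nat.eq_zero_or_pos (p.1.count true) with hc | hc
  · left
    have hmem : true ∉ p.1 := List.count_eq_zero.mp hc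
    have e1 : p.1 = List.replicate p.1.length false := by
      refine List.eq_replicate_of_mem fun x hx => ?_
      cases x
      · rfl
      · exact absurd hx hmem
    have k1 : p.1.length = 1 := ulamN_replicate_false n _ (e1 ▸ h3)
    have e1' : p.1 = [false] := by rw [e1, k1]; rfl
    cases a with
    | zero =>
      exfalso
      rw [e1'] at h6
      simp [Wd] at h6
    | succ a' =>
      refine ⟨a', rfl, e1', ?_⟩
      rw [e1', Wd_cons] at h6
      simpa using h6
  · right
    have hc2 : p.2.count true = 0 := by omega
    have hmem : true ∉ p.2 := List.count_eq_zero.mp hc2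
    have e2 : p.2 = List.replicate p.2.length false := by
      refine List.eq_replicate_of_mem fun x hx => ?_
      cases x
      · rfl
      · exact absurd hx hmem
    have k2 : p.2.length = 1 := ulamN_replicate_false m _ (e2 ▸ h4)
    have e2' : p.2 = [false] := by rw [e2, k2]; rfl
    cases b with
    | zero =>
      exfalso
      rw [e2'] at h6
      have h6' : p.1 ++ [false] = List.replicate a false ++ [true] := by
        rw [h6]; simp [Wd]
      have hlen : p.1.length = (List.replicate a false).length := by
        have := congrArg List.length h6'
        simp at this; simpa using this
      obtain ⟨-, h⟩ := List.append_inj h6' hlen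
      simp at h
    | succ b' =>
      refine ⟨b', rfl, ?_, e2'⟩
      rw [e2', Wd_concat] at h6
      exact List.append_cancel_right h6

/-! ### Unique-existence counting lemmas -/

lemma existsUnique_two {α : Type*} {x y : α} (hxy : x ≠ y) (A B : Prop) :
    (∃! p, (p = x ∧ A) ∨ (p = y ∧ B)) ↔ Xor' A B := by
  constructor
  · rintro ⟨p, hp, hu⟩
    rcases hp with ⟨rfl, hA⟩ | ⟨rfl, hB⟩
    · refine Or.inl ⟨hA, fun hB => hxy ?_⟩
      exact (hu y (Or.inr ⟨rfl, hB⟩)).symm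
    · refine Or.inr ⟨hB, fun hA => hxy ?_⟩
      exact hu x (Or.inl ⟨rfl, hA⟩)
  · rintro (⟨hA, hnB⟩ | ⟨hB, hnA⟩)
    · refine ⟨x, Or.inl ⟨rfl, hA⟩, ?_⟩
      rintro q (⟨rfl, -⟩ | ⟨rfl, hB⟩)
      · rfl
      · exact absurd hB hnB
    · refine ⟨y, Or.inr ⟨rfl, hB⟩, ?_⟩
      rintro q (⟨rfl, hA⟩ | ⟨rfl, -⟩)
      · exact absurd hA hnA
      · rfl

lemma existsUnique_one {α : Type*} (x : α) (A : Prop) :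
    (∃! p, p = x ∧ A) ↔ A := by
  constructor
  · rintro ⟨p, ⟨rfl, hA⟩, -⟩; exact hA
  · intro hA; exact ⟨x, ⟨rfl, hA⟩, by rintro q ⟨rfl, -⟩; rfl⟩

/-! ### Characterization of `IsUlam (Wd a b)` -/

lemma pred_iff (a b : ℕ) (p : List Bool × List Bool) :
    (p.1 ≠ [] ∧ p.2 ≠ [] ∧ UlamN (a+b) p.1 ∧ UlamN (a+b) p.2 ∧ p.1 ≠ p.2 ∧ p.1 ++ p.2 = Wd a b)
    ↔ ((∃ a', a = a'+1 ∧ p = ([false], Wd a' b) ∧ IsUlam (Wd a' b)) ∨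
       (∃ b', b = b'+1 ∧ p = (Wd a b', [false]) ∧ IsUlam (Wd a b'))) := by
  constructor
  · rintro ⟨h1, h2, h3, h4, h5, h6⟩
    rcases split_Wd a b (a+b) (a+b) h3 h4 h6 with ⟨a', rfl, e1, e2⟩ | ⟨b', rfl, e1, e2⟩
    · refine Or.inl ⟨a', rfl, ?_, ?_⟩
      · exact Prod.ext e1 e2
      · have hlen : (Wd a' b).length ≤ a' + 1 + b := by rw [Wd_length]; omega
        exact (ulamN_of_le hlen).mp (e2 ▸ h4)
    · refine Or.inr ⟨b', rfl, ?_, ?_⟩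
      · exact Prod.ext e1 e2
      · have hlen : (Wd a b').length ≤ a + (b' + 1) := by rw [Wd_length]; omega
        exact (ulamN_of_le hlen).mp (e1 ▸ h3)
  · rintro (⟨a', rfl, rfl, hU⟩ | ⟨b', rfl, rfl, hU⟩)
    · refine ⟨by simp, Wd_ne_nil a' b, ?_, ?_, ?_, ?_⟩
      · exact (ulamN_of_le (by simp; omega)).mpr isUlam_flist
      · exact (ulamN_of_le (by rw [Wd_length]; omega)).mpr hU
      · exact fun h => Wd_ne_flist a' b h.symm
      · rw [Wd_cons]; rfl
    · refine ⟨Wd_ne_nil a b', by simp, ?_, ?_, ?_, ?_⟩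
      · exact (ulamN_of_le (by rw [Wd_length]; omega)).mpr hU
      · exact (ulamN_of_le (by simp; omega)).mpr isUlam_flist
      · exact Wd_ne_flist a b'
      · rw [Wd_concat]

lemma isUlam_Wd_iff (a b : ℕ) (h : 1 ≤ a + b) :
    IsUlam (Wd a b) ↔
      ∃! p : List Bool × List Bool,
        ((∃ a', a = a'+1 ∧ p = ([false], Wd a' b) ∧ IsUlam (Wd a' b)) ∨
         (∃ b', b = b'+1 ∧ p = (Wd a b', [false]) ∧ IsUlam (Wd a b'))) := by
  have h1 : IsUlam (Wd a b) ↔ UlamN (a + b + 1) (Wd a b) :=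
    ((ulamN_of_le (by rw [Wd_length])).symm)
  rw [h1, ulamN_succ]
  have hne1 : Wd a b ≠ [false] := Wd_ne_flist a b
  have hne2 : Wd a b ≠ [true] := by
    intro hE
    have := congrArg List.length hE
    rw [Wd_length] at this
    simp at this; omega
  simp only [hne1, hne2, false_or]
  exact existsUnique_congr fun p => pred_iff a b p

/-! ### The Ulam recursion for `Wd` -/

lemma isUlam_Wd_left (a : ℕ) : IsUlam (Wd a 0) := by
  induction a with
  | zero => rw [Wd_zero_zero]; exact isUlam_tlist
  | succ a ih =>
    rw [isUlam_Wd_iff (a+1) 0 (by omega)]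
    have : ∀ p : List Bool × List Bool,
        ((∃ a', a + 1 = a'+1 ∧ p = ([false], Wd a' 0) ∧ IsUlam (Wd a' 0)) ∨
         (∃ b', 0 = b'+1 ∧ p = (Wd (a+1) b', [false]) ∧ IsUlam (Wd (a+1) b'))) ↔
        (p = ([false], Wd a 0) ∧ IsUlam (Wd a 0)) := by
      intro p
      constructor
      · rintro (⟨a', ha, hp, hU⟩ | ⟨b', hb, -, -⟩)
        · obtain rfl : a' = a := by omega
          exact ⟨hp, hU⟩
        · omega
      · rintro ⟨hp, hU⟩; exact Or.inl ⟨a, rfl, hp, hU⟩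
    rw [existsUnique_congr this, existsUnique_one]
    exact ih

lemma isUlam_Wd_right (b : ℕ) : IsUlam (Wd 0 b) := by
  induction b with
  | zero => rw [Wd_zero_zero]; exact isUlam_tlist
  | succ b ih =>
    rw [isUlam_Wd_iff 0 (b+1) (by omega)]
    have : ∀ p : List Bool × List Bool,
        ((∃ a', 0 = a'+1 ∧ p = ([false], Wd a' (b+1)) ∧ IsUlam (Wd a' (b+1))) ∨
         (∃ b', b + 1 = b'+1 ∧ p = (Wd 0 b', [false]) ∧ IsUlam (Wd 0 b'))) ↔
        (p = (Wd 0 b, [false]) ∧ IsUlam (Wd 0 b)) := by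
      intro p
      constructor
      · rintro (⟨a', ha, -, -⟩ | ⟨b', hb, hp, hU⟩)
        · omega
        · obtain rfl : b' = b := by omega
          exact ⟨hp, hU⟩
      · rintro ⟨hp, hU⟩; exact Or.inr ⟨b, rfl, hp, hU⟩
    rw [existsUnique_congr this, existsUnique_one]
    exact ih

lemma isUlam_Wd_step (a b : ℕ) :
    IsUlam (Wd (a+1) (b+1)) ↔ Xor' (IsUlam (Wd a (b+1))) (IsUlam (Wd (a+1) b)) := by
  rw [isUlam_Wd_iff (a+1) (b+1) (by omega)]
  have hxy : (([false], Wd a (b+1)) : List Bool × List Bool) ≠ (Wd (a+1) b, [false]) := by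
    intro h
    exact Wd_ne_flist (a+1) b (congrArg Prod.fst h).symm
  have : ∀ p : List Bool × List Bool,
      ((∃ a', a + 1 = a'+1 ∧ p = ([false], Wd a' (b+1)) ∧ IsUlam (Wd a' (b+1))) ∨
       (∃ b', b + 1 = b'+1 ∧ p = (Wd (a+1) b', [false]) ∧ IsUlam (Wd (a+1) b'))) ↔
      ((p = ([false], Wd a (b+1)) ∧ IsUlam (Wd a (b+1))) ∨
       (p = (Wd (a+1) b, [false]) ∧ IsUlam (Wd (a+1) b))) := by
    intro p
    constructor
    · rintro (⟨a', ha, hp, hU⟩ | ⟨b', hb, hp, hU⟩)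
      · obtain rfl : a' = a := by omega
        exact Or.inl ⟨hp, hU⟩
      · obtain rfl : b' = b := by omega
        exact Or.inr ⟨hp, hU⟩
    · rintro (⟨hp, hU⟩ | ⟨hp, hU⟩)
      · exact Or.inl ⟨a, rfl, hp, hU⟩
      · exact Or.inr ⟨b, rfl, hp, hU⟩
  rw [existsUnique_congr this, existsUnique_two hxy]

/-! ### Parity of binomial coefficients -/

lemma odd_add_xor (m n : ℕ) : Odd (m + n) ↔ Xor' (Odd m) (Odd n) := by
  simp only [Xor', Xor, Nat.odd_iff]
  omega

/-! ### Main theorem -/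

lemma main_Wd : ∀ n a b, a + b ≤ n → (IsUlam (Wd a b) ↔ Odd ((a + b).choose a)) := by
  intro n
  induction n with
  | zero =>
    intro a b h
    obtain rfl : a = 0 := by omega
    obtain rfl : b = 0 := by omega
    simp only [Nat.choose_self]
    rw [Wd_zero_zero]
    exact iff_of_true isUlam_tlist odd_one
  | succ n ih =>
    intro a b h
    match a, b with
    | 0, b =>
      simp only [Nat.zero_add, Nat.choose_zero_right]
      exact iff_of_true (isUlam_Wd_right b) odd_one
    | a+1, 0 =>
      simp only [Nat.add_zero, Nat.choose_self]
      exact iff_of_true (isUlam_Wd_left (a+1)) odd_one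
    | a+1, b+1 =>
      rw [isUlam_Wd_step a b,
        ih a (b+1) (by omega), ih (a+1) b (by omega)]
      have e1 : a + (b+1) = a + b + 1 := by omega
      have e2 : (a+1) + b = a + b + 1 := by omega
      have e3 : (a+1) + (b+1) = (a + b + 1) + 1 := by omega
      rw [e1, e2, e3]
      rw [show (a + b + 1 + 1).choose (a + 1) = (a+b+1).choose a + (a+b+1).choose (a+1) from
        Nat.choose_succ_succ (a+b+1) a, odd_add_xor]

theorem ulam_one_one (a b : ℕ) :
    IsUlam (List.replicate a false ++ [true] ++ List.replicate b false) ↔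
      Odd ((a + b).choose a) := by
  exact main_Wd (a + b) a b le_rfl
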